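/- Let T be a real symmetric tridiagonal n×n matrix (n ≥ 2) and let μ be an eigenvalue of the trailing 2×2 principal submatrix [[T_{n−1,n−1}, T_{n−1,n}], [T_{n,n−1}, T_{n,n}]] whose distance to T_{n,n} is minimal among the eigenvalues of that 2×2 submatrix (this is Wilkinson's shift ω(T)). Then |μ − T_{n,n}| ≤ √2 · |b(T)|, and there exists an eigenvalue λ of T with |μ − λ| ≤ 2√2 · |b(T)|. -/

import Mathlib

open Matrix Filter Topology

attribute [local instance] Matrix.normedAddCommGroup Matrix.normedSpace

noncomputable section

attribute [local instance] Classical.propDecidable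

/-- The first `n+1` columns of the `(n+2)×(n+2)` matrix `M` are linearly independent,
i.e. `M` is *almost invertible*. -/
def AlmostInv {n : ℕ} (M : Matrix (Fin (n+2)) (Fin (n+2)) ℝ) : Prop :=
  LinearIndependent ℝ (fun j : Fin (n+1) => fun i => M i j.castSucc)

/-- `M = Q⋆ R⋆` with `Q⋆` orthogonal of determinant one and `R⋆` upper triangular
with positive diagonal except possibly at the last entry. -/
def IsQsRs {n : ℕ} (M Q R : Matrix (Fin (n+2)) (Fin (n+2)) ℝ) : Prop :=
  Qᵀ * Q = 1 ∧ Q.det = 1 ∧ (∀ i j : Fin (n+2), j < i → R i j = 0) ∧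
    (∀ i : Fin (n+1), 0 < R i.castSucc i.castSucc) ∧ M = Q * R

/-- `M = Q R` with `Q` orthogonal and `R` upper triangular with positive diagonal. -/
def IsQR {n : ℕ} (M Q R : Matrix (Fin (n+2)) (Fin (n+2)) ℝ) : Prop :=
  Qᵀ * Q = 1 ∧ (∀ i j : Fin (n+2), j < i → R i j = 0) ∧
    (∀ i : Fin (n+2), 0 < R i i) ∧ M = Q * R

/-- `E_n = diag(1, …, 1, -1)`. -/
def En (n : ℕ) : Matrix (Fin (n+2)) (Fin (n+2)) ℝ :=
  Matrix.diagonal (fun i => if i = Fin.last (n+1) then -1 else 1)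

/-- The signed shifted QR step `F_s(T) = Q⋆ᵀ T Q⋆` where `T - s I = Q⋆ R⋆`. -/
def Fs {n : ℕ} (s : ℝ) (T : Matrix (Fin (n+2)) (Fin (n+2)) ℝ) :
    Matrix (Fin (n+2)) (Fin (n+2)) ℝ :=
  if h : ∃ Q R, IsQsRs (T - s • 1) Q R then (h.choose)ᵀ * T * h.choose else 0

/-- The (plain) shifted QR step `Φ(T, s) = Qᵀ T Q` where `T - s I = Q R`. -/
def Phi {n : ℕ} (T : Matrix (Fin (n+2)) (Fin (n+2)) ℝ) (s : ℝ) :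
    Matrix (Fin (n+2)) (Fin (n+2)) ℝ :=
  if h : ∃ Q R, IsQR (T - s • 1) Q R then (h.choose)ᵀ * T * h.choose else 0

/-- `T` is symmetric and tridiagonal. -/
def SymTridiag {n : ℕ} (T : Matrix (Fin (n+2)) (Fin (n+2)) ℝ) : Prop :=
  Tᵀ = T ∧ ∀ i j : Fin (n+2), (i.val + 1 < j.val ∨ j.val + 1 < i.val) → T i j = 0

/-- `b(T)`, the lowest subdiagonal entry `T_{n, n-1}` (1-based). -/
def lowb {n : ℕ} (T : Matrix (Fin (n+2)) (Fin (n+2)) ℝ) : ℝ :=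
  T (Fin.last (n+1)) ⟨n, by omega⟩

/-- `T` is unreduced: all subdiagonal entries are nonzero. -/
def Unreduced {n : ℕ} (T : Matrix (Fin (n+2)) (Fin (n+2)) ℝ) : Prop :=
  ∀ i : Fin (n+1), T i.succ i.castSucc ≠ 0

/-- `𝒯_Λ`: real symmetric tridiagonal matrices with the same characteristic polynomial
as `Λ = diagonal lam`. -/
def TSet {n : ℕ} (lam : Fin (n+2) → ℝ) : Set (Matrix (Fin (n+2)) (Fin (n+2)) ℝ) :=
  {T | SymTridiag T ∧ T.charpoly = (Matrix.diagonal lam).charpoly}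

/-- The deflation neighborhood `D^i_{Λ,ε}`. -/
def Dset {n : ℕ} (lam : Fin (n+2) → ℝ) (ε : ℝ) (i : Fin (n+2)) :
    Set (Matrix (Fin (n+2)) (Fin (n+2)) ℝ) :=
  {T ∈ TSet lam | |lowb T| ≤ ε ∧
    |T (Fin.last (n+1)) (Fin.last (n+1)) - lam i| ≤ Real.sqrt 2 * ε}

/-- The deflation set `D^i_{Λ,0}`. -/
def D0 {n : ℕ} (lam : Fin (n+2) → ℝ) (i : Fin (n+2)) :
    Set (Matrix (Fin (n+2)) (Fin (n+2)) ℝ) :=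
  {T ∈ TSet lam | lowb T = 0 ∧ T (Fin.last (n+1)) (Fin.last (n+1)) = lam i}

/-- The deflation domain `D^i_Λ`: matrices `T ∈ 𝒯_Λ` with `T - λ_i I` almost invertible. -/
def DD {n : ℕ} (lam : Fin (n+2) → ℝ) (i : Fin (n+2)) :
    Set (Matrix (Fin (n+2)) (Fin (n+2)) ℝ) :=
  {T ∈ TSet lam | AlmostInv (T - lam i • 1)}

/-- A simple shift strategy. -/
def SimpleShift {n : ℕ} (lam : Fin (n+2) → ℝ)
    (σ : Matrix (Fin (n+2)) (Fin (n+2)) ℝ → ℝ) : Prop :=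
  (∀ T ∈ TSet lam, σ (En n * T * En n) = σ T) ∧
  ∃ C > 0, ∀ T ∈ TSet lam, ∃ i : Fin (n+2), |σ T - lam i| ≤ C * |lowb T|

/-- The vector space of real symmetric tridiagonal matrices. -/
def STSpace (n : ℕ) : Submodule ℝ (Matrix (Fin (n+2)) (Fin (n+2)) ℝ) where
  carrier := {T | SymTridiag T}
  add_mem' := by
    rintro a b ⟨ha1, ha2⟩ ⟨hb1, hb2⟩
    refine ⟨by rw [Matrix.transpose_add, ha1, hb1], fun i j h => ?_⟩
    simp [Matrix.add_apply, ha2 i j h, hb2 i j h]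
  zero_mem' := ⟨Matrix.transpose_zero, fun i j _ => rfl⟩
  smul_mem' := by
    rintro c a ⟨ha1, ha2⟩
    refine ⟨by rw [Matrix.transpose_smul, ha1], fun i j h => ?_⟩
    simp [Matrix.smul_apply, ha2 i j h]

/-- `σ` is smooth near `A ⊆ 𝒯_Λ`: there are an open subset `U` of the vector space of
symmetric tridiagonal matrices containing `A` and a `C^∞` function on `U` agreeing with
`σ` on `U ∩ 𝒯_Λ`. -/
def SmoothNear {n : ℕ} (lam : Fin (n+2) → ℝ)
    (σ : Matrix (Fin (n+2)) (Fin (n+2)) ℝ → ℝ)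
    (A : Set (Matrix (Fin (n+2)) (Fin (n+2)) ℝ)) : Prop :=
  ∃ (U : Set (STSpace n)) (σt : STSpace n → ℝ),
    IsOpen U ∧
    (∀ T : STSpace n, (T : Matrix (Fin (n+2)) (Fin (n+2)) ℝ) ∈ A → T ∈ U) ∧
    ContDiffOn ℝ (⊤ : ℕ∞) σt U ∧
    ∀ T : STSpace n, T ∈ U → (T : Matrix (Fin (n+2)) (Fin (n+2)) ℝ) ∈ TSet lam →
      σt T = σ (T : Matrix (Fin (n+2)) (Fin (n+2)) ℝ)

/-- The Frobenius norm `‖A‖ = √(trace(Aᵀ A))`. -/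
def frobNorm {n : ℕ} (A : Matrix (Fin (n+2)) (Fin (n+2)) ℝ) : ℝ :=
  Real.sqrt (Matrix.trace (Aᵀ * A))

end

lemma charpoly_eval' {m : Type*} [Fintype m] [DecidableEq m] (M : Matrix m m ℝ) (x : ℝ) :
    M.charpoly.eval x = (x • (1 : Matrix m m ℝ) - M).det := by
  rw [Matrix.charpoly, eval_det, Matrix.matPolyEquiv_charmatrix]
  congr 1
  ext i j
  simp [Matrix.sub_apply, Matrix.smul_apply, Matrix.one_apply, Matrix.scalar_apply,
    Matrix.diagonal_apply]
lemma exists_eigen_close {m : Type*} [Fintype m] [DecidableEq m] [Nonempty m]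
    (T : Matrix m m ℝ) (hH : T.IsHermitian) (μ : ℝ) (L : m) :
    ∃ lam : ℝ, T.charpoly.IsRoot lam ∧
      (μ - lam)^2 ≤ ∑ k, ((T - μ • (1 : Matrix m m ℝ)) L k)^2 := by
  classical
  set B : Matrix m m ℝ := (hH.eigenvectorUnitary : Matrix m m ℝ) with hBdef
  set ev : m → ℝ := hH.eigenvalues with hevdef
  have hB1 : star B * B = 1 := (Matrix.mem_unitaryGroup_iff').mp hH.eigenvectorUnitary.2
  have hB2 : B * star B = 1 := (Matrix.mem_unitaryGroup_iff).mp hH.eigenvectorUnitary.2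
  have hspec : T = B * Matrix.diagonal ev * star B := by
    have h := hH.spectral_theorem
    simpa [RCLike.ofReal_real_eq_id] using h
  -- diagonalization identity for shifts
  have hshift : ∀ x : ℝ, T - x • (1 : Matrix m m ℝ)
      = B * Matrix.diagonal (fun i => ev i - x) * star B := by
    intro x
    have h1 : Matrix.diagonal (fun i => ev i - x)
        = Matrix.diagonal ev - x • (1 : Matrix m m ℝ) := by
      rw [Matrix.smul_one_eq_diagonal, ← Matrix.diagonal_sub]
    rw [h1, Matrix.mul_sub, Matrix.sub_mul, ← hspec]
    congr 1
    rw [Matrix.mul_smul, Matrix.mul_one, Matrix.smul_mul, hB2]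
  -- pick the closest eigenvalue
  obtain ⟨i₀, -, hi₀⟩ := Finset.exists_min_image Finset.univ (fun i => |μ - ev i|)
    ⟨Classical.arbitrary m, Finset.mem_univ _⟩
  refine ⟨ev i₀, ?_, ?_⟩
  · rw [Polynomial.IsRoot, charpoly_eval']
    have h1 : ev i₀ • (1 : Matrix m m ℝ) - T
        = B * Matrix.diagonal (fun i => ev i₀ - ev i) * star B := by
      have := hshift (ev i₀)
      have h2 : ev i₀ • (1 : Matrix m m ℝ) - T = -(T - ev i₀ • (1 : Matrix m m ℝ)) :=
        (neg_sub _ _).symm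
      have h3 : (Matrix.diagonal fun i => ev i₀ - ev i)
          = -(Matrix.diagonal fun i => ev i - ev i₀) := by
        ext i j
        by_cases h : i = j
        · subst h; simp
        · simp [Matrix.diagonal_apply_ne _ h]
      rw [h2, this, h3, mul_neg, neg_mul]
    rw [h1, Matrix.det_mul, Matrix.det_mul, mul_comm, ← mul_assoc, ← Matrix.det_mul, hB1,
      Matrix.det_one, one_mul, Matrix.det_diagonal]
    exact Finset.prod_eq_zero (Finset.mem_univ i₀) (by simp)
  · -- the quantitative bound
    set M : Matrix m m ℝ := T - μ • (1 : Matrix m m ℝ) with hMdef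
    have hMsymm : ∀ i j, M j i = M i j := by
      intro i j
      have := congrFun (congrFun hH i) j
      simp only [Matrix.conjTranspose_apply, star_trivial] at this
      simp only [hMdef, Matrix.sub_apply, Matrix.smul_apply, this]
      rw [show (1 : Matrix m m ℝ) j i = (1 : Matrix m m ℝ) i j from by
        simp [Matrix.one_apply, eq_comm]]
    have hMM : M * M = B * Matrix.diagonal (fun i => (ev i - μ)^2) * star B := by
      rw [hMdef, hshift μ]
      rw [show (B * Matrix.diagonal (fun i => ev i - μ) * star B) *
            (B * Matrix.diagonal (fun i => ev i - μ) * star B)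
          = B * (Matrix.diagonal (fun i => ev i - μ) * (star B * B) *
              Matrix.diagonal (fun i => ev i - μ)) * star B from by noncomm_ring,
        hB1, mul_one, Matrix.diagonal_mul_diagonal,
        show (fun i => (ev i - μ) * (ev i - μ)) = (fun i => (ev i - μ)^2) from
          funext fun i => by ring]
    have hentry : ∀ g : m → ℝ, (B * Matrix.diagonal g * star B) L L
        = ∑ j, g j * (B L j)^2 := by
      intro g
      rw [Matrix.mul_apply]
      refine Finset.sum_congr rfl fun j _ => ?_
      rw [Matrix.mul_diagonal, Matrix.star_apply, star_trivial]
      ring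
    have hsum1 : ∑ j, (B L j)^2 = 1 := by
      have := congrFun (congrFun hB2 L) L
      rw [Matrix.mul_apply] at this
      simp only [Matrix.one_apply_eq] at this
      rw [← this]
      refine Finset.sum_congr rfl fun j _ => ?_
      rw [Matrix.star_apply, star_trivial]; ring
    have hLL : (M * M) L L = ∑ j, (ev j - μ)^2 * (B L j)^2 := by rw [hMM, hentry]
    have hLL' : (M * M) L L = ∑ k, (M L k)^2 := by
      rw [Matrix.mul_apply]
      refine Finset.sum_congr rfl fun k _ => ?_
      rw [hMsymm]; ring
    have hmin2 : ∀ j, (μ - ev i₀)^2 ≤ (ev j - μ)^2 := by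
      intro j
      have h := hi₀ j (Finset.mem_univ j)
      have h2 := pow_le_pow_left₀ (abs_nonneg _) h 2
      rw [sq_abs, sq_abs] at h2
      nlinarith [h2]
    calc (μ - ev i₀)^2 = (μ - ev i₀)^2 * ∑ j, (B L j)^2 := by rw [hsum1, mul_one]
      _ = ∑ j, (μ - ev i₀)^2 * (B L j)^2 := by rw [Finset.mul_sum]
      _ ≤ ∑ j, (ev j - μ)^2 * (B L j)^2 :=
          Finset.sum_le_sum fun j _ => mul_le_mul_of_nonneg_right (hmin2 j) (sq_nonneg _)
      _ = ∑ k, (M L k)^2 := by rw [← hLL, hLL']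


set_option maxHeartbeats 1600000 in
theorem stmt4 (n : ℕ) (T : Matrix (Fin (n+2)) (Fin (n+2)) ℝ) (hT : SymTridiag T)
    (μ : ℝ) (A : Matrix (Fin 2) (Fin 2) ℝ)
    (hA : A = !![T ⟨n, by omega⟩ ⟨n, by omega⟩, T ⟨n, by omega⟩ (Fin.last (n+1));
                 T (Fin.last (n+1)) ⟨n, by omega⟩, T (Fin.last (n+1)) (Fin.last (n+1))])
    (hμ : A.charpoly.IsRoot μ)
    (hmin : ∀ μ' : ℝ, A.charpoly.IsRoot μ' →
      |μ - T (Fin.last (n+1)) (Fin.last (n+1))| ≤ |μ' - T (Fin.last (n+1)) (Fin.last (n+1))|) :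
    |μ - T (Fin.last (n+1)) (Fin.last (n+1))| ≤ Real.sqrt 2 * |lowb T| ∧
    ∃ lam : ℝ, T.charpoly.IsRoot lam ∧ |μ - lam| ≤ 2 * Real.sqrt 2 * |lowb T| := by
  classical
  set kn : Fin (n+2) := ⟨n, by omega⟩ with hkn
  set L : Fin (n+2) := Fin.last (n+1) with hL
  have hknL : kn ≠ L := by
    intro h
    have := congrArg Fin.val h
    simp [hkn, hL, Fin.last] at this
  set a : ℝ := T kn kn with ha
  set d : ℝ := T L L with hd
  set b : ℝ := T L kn with hb
  have hsym : T kn L = b := by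
    rw [hb]
    exact (congrFun (congrFun hT.1 kn) L).symm
  have hA' : A = !![a, b; b, d] := by rw [hA, ← hsym]
  have hlowb : lowb T = b := rfl
  -- basic sqrt facts
  have hs2 : Real.sqrt 2 ^ 2 = 2 := Real.sq_sqrt (by norm_num)
  have hs0 : (0:ℝ) ≤ Real.sqrt 2 := Real.sqrt_nonneg 2
  have hs1 : (1:ℝ) ≤ Real.sqrt 2 := by nlinarith
  -- Part 1
  have key : ∀ x : ℝ, A.charpoly.IsRoot x ↔ (x - a) * (x - d) - b * b = 0 := by
    intro x
    rw [Polynomial.IsRoot, charpoly_eval', hA']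
    constructor <;> intro h
    · rw [Matrix.det_fin_two] at h
      simp [Matrix.smul_apply, Matrix.one_apply] at h
      linarith [h]
    · rw [Matrix.det_fin_two]
      simp [Matrix.smul_apply, Matrix.one_apply]
      linarith [h]
  have hq := (key μ).1 hμ
  have hroot' : A.charpoly.IsRoot (a + d - μ) := (key _).2 (by nlinarith [hq])
  have h1 := hmin _ hroot'
  have h1' : |μ - d| ≤ |μ - a| := by
    rwa [show a + d - μ - d = -(μ - a) by ring, abs_neg] at h1
  have h2 : |μ - d| * |μ - a| = |b| * |b| := by
    rw [← abs_mul, ← abs_mul]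
    congr 1
    nlinarith [hq]
  have hpart1 : |μ - d| ≤ |b| := by
    nlinarith [abs_nonneg (μ - d), abs_nonneg (μ - a), abs_nonneg b]
  have hbnn : (0:ℝ) ≤ |b| := abs_nonneg b
  constructor
  · rw [hlowb]
    nlinarith
  -- Part 2
  have hH : T.IsHermitian := by
    rw [Matrix.IsHermitian, Matrix.conjTranspose_eq_transpose_of_trivial]
    exact hT.1
  obtain ⟨lam, hroot, hbound⟩ := exists_eigen_close T hH μ L
  refine ⟨lam, hroot, ?_⟩
  -- compute the sum
  set M : Matrix (Fin (n+2)) (Fin (n+2)) ℝ := T - μ • (1 : Matrix (Fin (n+2)) (Fin (n+2)) ℝ)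
    with hM
  have hzero : ∀ j : Fin (n+2), j ∉ ({kn, L} : Finset (Fin (n+2))) → (M L j)^2 = 0 := by
    intro j hj
    simp only [Finset.mem_insert, Finset.mem_singleton] at hj
    push_neg at hj
    obtain ⟨hj1, hj2⟩ := hj
    have hjv : j.val + 1 < L.val := by
      have h1 : j.val ≠ n := fun h => hj1 (Fin.ext h)
      have h2 : j.val ≠ n + 1 := fun h => hj2 (Fin.ext h)
      have := j.isLt
      simp only [hL, Fin.val_last]
      omega
    have hTz : T L j = 0 := hT.2 L j (Or.inr hjv)
    have h1z : (1 : Matrix (Fin (n+2)) (Fin (n+2)) ℝ) L j = 0 := by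
      rw [Matrix.one_apply_ne]
      intro h; exact hj2 h.symm
    simp [hM, Matrix.sub_apply, Matrix.smul_apply, hTz, h1z]
  have hsumval : ∑ k, (M L k)^2 = b^2 + (d - μ)^2 := by
    rw [← Finset.sum_subset (Finset.subset_univ ({kn, L} : Finset (Fin (n+2))))
      (fun j _ hj => hzero j hj)]
    rw [Finset.sum_pair hknL]
    have e1 : M L kn = b := by
      simp [hM, Matrix.sub_apply, Matrix.smul_apply, Matrix.one_apply_ne (Ne.symm hknL), hb]
    have e2 : M L L = d - μ := by
      simp [hM, Matrix.sub_apply, Matrix.smul_apply, Matrix.one_apply_eq, hd]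
    rw [e1, e2]
  rw [hsumval] at hbound
  have h9 : |μ - d| * |μ - d| ≤ |b| * |b| := mul_self_le_mul_self (abs_nonneg _) hpart1
  have hbound2 : (μ - lam)^2 ≤ 2 * |b|^2 := by
    nlinarith [sq_abs b, sq_abs (μ - d), h9, hbound]
  have h7 : |μ - lam|^2 ≤ (Real.sqrt 2 * |b|)^2 := by
    rw [mul_pow, hs2, sq_abs]
    exact hbound2
  have h8 : |μ - lam| ≤ Real.sqrt 2 * |b| := by
    nlinarith [abs_nonneg (μ - lam), mul_nonneg hs0 hbnn]
  rw [hlowb]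
  nlinarith [mul_nonneg hs0 hbnn]
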